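/- Asymptotics of the implicit threshold equation: Fix a real M ≥ 0. For every c > 0 there exists a unique real L = L(c) > M satisfying L = M + exp(c / L); this L satisfies L · log(L − M) = c, and moreover L(c) · log L(c) / c → 1 as c → ∞ (equivalently, L log L = c (1 + o(1))). Consequently, L(c) ≤ (c / log c)(1 + o(1)) as c → ∞. -/

import Mathlib

open Filter

/-- **Asymptotics of the implicit threshold equation.**  Fix `M ≥ 0`.  For every
`c > 0` there exists a unique `L > M` with `L = M + exp (c / L)`; any such choice function
`c ↦ L c` satisfies `L c * log (L c - M) = c`, `L c * log (L c) / c → 1` as `c → ∞`, and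
`L c ≤ (c / log c) (1 + o(1))` as `c → ∞`. -/
theorem implicit_threshold_asymptotics (M : ℝ) (hM : 0 ≤ M) :
    (∀ c : ℝ, 0 < c → ∃! L : ℝ, M < L ∧ L = M + Real.exp (c / L)) ∧
    (∀ L : ℝ → ℝ, (∀ c : ℝ, 0 < c → M < L c ∧ L c = M + Real.exp (c / L c)) →
      (∀ c : ℝ, 0 < c → L c * Real.log (L c - M) = c) ∧
      Tendsto (fun c => L c * Real.log (L c) / c) atTop (nhds 1) ∧
      ∃ g : ℝ → ℝ, Tendsto g atTop (nhds 1) ∧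
        ∀ᶠ c in atTop, L c ≤ c / Real.log c * g c) := by
  constructor
  · -- existence and uniqueness
    intro c hc
    have hM1 : (0:ℝ) < M + 1 := by linarith
    set E := Real.exp (c / (M + 1)) with hE
    have hE1 : 1 ≤ E := Real.one_le_exp (le_of_lt (div_pos hc hM1))
    have hab : M + 1 ≤ M + E := by linarith
    have hcont : ContinuousOn (fun x => x - Real.exp (c / x)) (Set.Icc (M+1) (M+E)) := by
      apply ContinuousOn.sub continuousOn_id
      apply Real.continuous_exp.comp_continuousOn
      apply ContinuousOn.div continuousOn_const continuousOn_id
      intro x hx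
      have h1 : M + 1 ≤ x := hx.1
      show id x ≠ 0
      simp only [id_eq]
      exact ne_of_gt (by linarith)
    have hmem : M ∈ Set.Icc ((fun x => x - Real.exp (c / x)) (M+1))
        ((fun x => x - Real.exp (c / x)) (M+E)) := by
      constructor
      · simp only
        rw [← hE]
        linarith
      · simp only
        have hdiv : c / (M + E) ≤ c / (M + 1) := by
          apply div_le_div_of_nonneg_left hc.le hM1
          linarith
        have : Real.exp (c / (M + E)) ≤ E := by
          rw [hE]
          exact Real.exp_le_exp.mpr hdiv
        linarith
    obtain ⟨x, hx, hfx⟩ := intermediate_value_Icc hab hcont hmem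
    have hxge : M + 1 ≤ x := hx.1
    have hxgt : M < x := by linarith
    have hxeq : x = M + Real.exp (c / x) := by
      simp only at hfx
      linarith
    refine ⟨x, ⟨hxgt, hxeq⟩, ?_⟩
    intro y ⟨hygt, hyeq⟩
    have key : ∀ u v : ℝ, M < u → M < v → u = M + Real.exp (c / u) →
        v = M + Real.exp (c / v) → u < v → False := by
      intro u v hu hv hue hve huv
      have hu0 : 0 < u := lt_of_le_of_lt hM hu
      have hdiv : c / v < c / u := div_lt_div_of_pos_left hc hu0 huv
      have := Real.exp_lt_exp.mpr hdiv
      nlinarith [this]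
    rcases lt_trichotomy y x with h | h | h
    · exact absurd (key y x hygt hxgt hyeq hxeq h) (not_false)
    · exact h
    · exact absurd (key x y hxgt hygt hxeq hyeq h) (not_false)
  · -- asymptotics
    intro L hL
    have hbasic : ∀ c : ℝ, 0 < c → 0 < L c ∧ 1 < L c - M ∧ Real.log (L c - M) = c / L c := by
      intro c hc
      obtain ⟨h1, h2⟩ := hL c hc
      have hpos : 0 < L c := lt_of_le_of_lt hM h1
      have heq : L c - M = Real.exp (c / L c) := by linarith
      have hgt1 : 1 < Real.exp (c / L c) := Real.one_lt_exp_iff.mpr (div_pos hc hpos)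
      refine ⟨hpos, by rw [heq]; exact hgt1, by rw [heq, Real.log_exp]⟩
    have key : ∀ c : ℝ, 0 < c → L c * Real.log (L c - M) = c := by
      intro c hc
      obtain ⟨hpos, _, hlog⟩ := hbasic c hc
      rw [hlog]
      field_simp
    -- L c ≥ sqrt c
    have hsqrt : ∀ c : ℝ, 0 < c → Real.sqrt c ≤ L c := by
      intro c hc
      obtain ⟨hpos, hgt1, hlog⟩ := hbasic c hc
      have hle : Real.log (L c - M) ≤ L c - M - 1 :=
        Real.log_le_sub_one_of_pos (by linarith)
      have hc2 : c ≤ L c ^ 2 := by nlinarith [key c hc]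
      have := Real.sqrt_le_sqrt hc2
      rwa [Real.sqrt_sq hpos.le] at this
    have hsqtop : Tendsto Real.sqrt atTop atTop :=
      (tendsto_rpow_atTop (by norm_num : (0:ℝ) < 1/2)).congr
        (fun x => (Real.sqrt_eq_rpow x).symm)
    have hLtop : Tendsto L atTop atTop := by
      apply tendsto_atTop_mono' atTop _ hsqtop
      filter_upwards [eventually_gt_atTop 0] with c hc
      exact hsqrt c hc
    have hLMtop : Tendsto (fun c => L c - M) atTop atTop := by
      simpa [sub_eq_add_neg] using tendsto_atTop_add_const_right atTop (-M) hLtop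
    have hloglm : Tendsto (fun c => Real.log (L c - M)) atTop atTop :=
      Real.tendsto_log_atTop.comp hLMtop
    have hlogL : Tendsto (fun c => Real.log (L c)) atTop atTop :=
      Real.tendsto_log_atTop.comp hLtop
    -- ratio identity
    have hlogpos : ∀ c : ℝ, 0 < c → 0 < Real.log (L c - M) := by
      intro c hc
      exact Real.log_pos (hbasic c hc).2.1
    have hratid : ∀ c : ℝ, 0 < c →
        L c * Real.log (L c) / c = Real.log (L c) / Real.log (L c - M) := by
      intro c hc
      obtain ⟨hpos, hgt1, _⟩ := hbasic c hc
      rw [div_eq_div_iff (ne_of_gt hc) (ne_of_gt (hlogpos c hc))]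
      linear_combination Real.log (L c) * key c hc
    have hratio : Tendsto (fun c => L c * Real.log (L c) / c) atTop (nhds 1) := by
      have hub : Tendsto (fun c => 1 + Real.log (1 + M) / Real.log (L c - M))
          atTop (nhds 1) := by
        have h0 : Tendsto (fun c => Real.log (1 + M) / Real.log (L c - M)) atTop (nhds 0) :=
          Tendsto.div_atTop tendsto_const_nhds hloglm
        simpa using tendsto_const_nhds.add h0
      apply tendsto_of_tendsto_of_tendsto_of_le_of_le' tendsto_const_nhds hub
      · filter_upwards [eventually_gt_atTop 0] with c hc
        obtain ⟨hpos, hgt1, _⟩ := hbasic c hc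
        rw [hratid c hc]
        rw [le_div_iff₀ (hlogpos c hc), one_mul]
        exact Real.log_le_log (by linarith) (by linarith)
      · filter_upwards [eventually_gt_atTop 0] with c hc
        obtain ⟨hpos, hgt1, _⟩ := hbasic c hc
        rw [hratid c hc]
        have h1 : Real.log (L c) ≤ Real.log (L c - M) + Real.log (1 + M) := by
          rw [← Real.log_mul (by linarith) (by linarith)]
          exact Real.log_le_log hpos (by nlinarith)
        calc Real.log (L c) / Real.log (L c - M)
            ≤ (Real.log (L c - M) + Real.log (1 + M)) / Real.log (L c - M) :=
              (div_le_div_iff_of_pos_right (hlogpos c hc)).mpr h1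
          _ = 1 + Real.log (1 + M) / Real.log (L c - M) := by
              rw [add_div, div_self (ne_of_gt (hlogpos c hc))]
    refine ⟨key, hratio, fun c => L c * Real.log c / c, ?_, ?_⟩
    · -- tendsto g 1
      have hlogLpos : ∀ c : ℝ, 0 < c → 0 < Real.log (L c) := by
        intro c hc
        obtain ⟨hpos, hgt1, _⟩ := hbasic c hc
        exact Real.log_pos (by linarith)
      have hident : (fun c => (L c * Real.log (L c) / c) * (Real.log c / Real.log (L c)))
          =ᶠ[atTop] (fun c => L c * Real.log c / c) := by
        filter_upwards [eventually_gt_atTop 0] with c hc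
        have h1 := hlogLpos c hc
        field_simp
      have hfrac : Tendsto (fun c => Real.log c / Real.log (L c)) atTop (nhds 1) := by
        have hlogc : ∀ c : ℝ, 0 < c →
            Real.log c = Real.log (L c) + Real.log (Real.log (L c - M)) := by
          intro c hc
          obtain ⟨hpos, hgt1, _⟩ := hbasic c hc
          conv_lhs => rw [← key c hc]
          rw [Real.log_mul (ne_of_gt hpos) (ne_of_gt (hlogpos c hc))]
        have h0 : Tendsto (fun x : ℝ => Real.log x / x) atTop (nhds 0) :=
          Real.isLittleO_log_id_atTop.tendsto_div_nhds_zero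
        have hub : Tendsto (fun c => 1 + Real.log (Real.log (L c)) / Real.log (L c))
            atTop (nhds 1) := by
          have := h0.comp hlogL
          simpa using tendsto_const_nhds.add this
        apply tendsto_of_tendsto_of_tendsto_of_le_of_le' tendsto_const_nhds hub
        · filter_upwards [eventually_gt_atTop 0,
            hloglm.eventually_ge_atTop 1] with c hc hge
          have h1 := hlogLpos c hc
          rw [hlogc c hc, le_div_iff₀ h1, one_mul]
          have : 0 ≤ Real.log (Real.log (L c - M)) := Real.log_nonneg hge
          linarith
        · filter_upwards [eventually_gt_atTop 0,
            hloglm.eventually_ge_atTop 1] with c hc hge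
          obtain ⟨hpos, hgt1, _⟩ := hbasic c hc
          have h1 := hlogLpos c hc
          have h2 : Real.log (L c - M) ≤ Real.log (L c) :=
            Real.log_le_log (by linarith) (by linarith)
          have h3 : Real.log (Real.log (L c - M)) ≤ Real.log (Real.log (L c)) :=
            Real.log_le_log (by linarith) h2
          rw [hlogc c hc, div_le_iff₀ h1, add_mul, one_mul,
            div_mul_cancel₀ _ (ne_of_gt h1)]
          linarith
      have := hratio.mul hfrac
      rw [mul_one] at this
      exact this.congr' hident
    · -- eventual bound
      filter_upwards [eventually_gt_atTop 1] with c hc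
      have hc0 : (0:ℝ) < c := by linarith
      have hlc : 0 < Real.log c := Real.log_pos hc
      have : c / Real.log c * (L c * Real.log c / c) = L c := by
        field_simp
      rw [this]
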